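/- arXiv:1602.08049 — 5 statements merged into one kernel-verified Lean document; each statement's English description precedes it below -/
import Mathlib

section
/- If a linear map E on operators is translationally covariant, i.e., satisfies e^{-ixL} E(A) e^{ixL} = E(e^{-ixL} A e^{ixL}) for all x ∈ ℝ and all operators A, then E commutes with the dephasing map D associated with the eigenspaces of L: E ∘ D = D ∘ E. -/
open Matrix

/-- The observable `L = Σ_l λ_l Π_l` built from spectral projectors. -/
noncomputable def Lof {n k : ℕ} (Pr : Fin k → Matrix (Fin n) (Fin n) ℂ)
    (lam : Fin k → ℝ) : Matrix (Fin n) (Fin n) ℂ :=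
  ∑ l, (lam l : ℂ) • Pr l

/-- Spectral formula for the exponential of `c • L`. -/
lemma expL {n k : ℕ} (Pr : Fin k → Matrix (Fin n) (Fin n) ℂ)
    (horth : ∀ l l', Pr l * Pr l' = if l = l' then Pr l else 0)
    (hsum : ∑ l, Pr l = 1) (lam : Fin k → ℝ) (c : ℂ) :
    NormedSpace.exp (c • Lof Pr lam) = ∑ l, Complex.exp (c * lam l) • Pr l := by
  letI : SeminormedRing (Matrix (Fin n) (Fin n) ℂ) := Matrix.linftyOpSemiNormedRing
  letI : NormedRing (Matrix (Fin n) (Fin n) ℂ) := Matrix.linftyOpNormedRing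
  letI : NormedAlgebra ℂ (Matrix (Fin n) (Fin n) ℂ) := Matrix.linftyOpNormedAlgebra
  let φL : (Fin k → ℂ) →ₗ[ℂ] Matrix (Fin n) (Fin n) ℂ :=
    { toFun := fun f => ∑ l, f l • Pr l
      map_add' := by intro f g; simp [add_smul, Finset.sum_add_distrib]
      map_smul' := by intro c f; simp [mul_smul, Finset.smul_sum] }
  have hone : φL 1 = 1 := by simp [φL, hsum]
  have hmul : ∀ f g, φL (f * g) = φL f * φL g := by
    intro f g
    simp only [φL, LinearMap.coe_mk, AddHom.coe_mk, Pi.mul_apply]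
    rw [Finset.sum_mul_sum]
    simp only [smul_mul_assoc, mul_smul_comm, smul_smul, horth]
    rw [Finset.sum_comm]
    simp [Finset.sum_ite_eq, mul_comm]
  let φ : (Fin k → ℂ) →ₐ[ℂ] Matrix (Fin n) (Fin n) ℂ := AlgHom.ofLinearMap φL hone hmul
  have hcont : Continuous φ := φ.toLinearMap.continuous_of_finiteDimensional
  have h1 : c • Lof Pr lam = φ (fun l => c * lam l) := by
    simp only [φ, φL, Lof, AlgHom.ofLinearMap, LinearMap.coe_mk, AddHom.coe_mk, AlgHom.coe_mk,
      RingHom.coe_mk, MonoidHom.coe_mk, OneHom.coe_mk, Finset.smul_sum]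
    exact Finset.sum_congr rfl fun x _ => smul_smul _ _ _
  rw [h1]
  erw [← NormedSpace.map_exp φ hcont]
  rw [Pi.exp_def]
  simp only [← Complex.exp_eq_exp_ℂ]
  simp [φ, φL, AlgHom.ofLinearMap]

/-- The character `x ↦ e^{i x v}` as a monoid hom from `Multiplicative ℝ` to `ℂ`. -/
noncomputable def chi (v : ℝ) : Multiplicative ℝ →* ℂ where
  toFun := fun x => Complex.exp (Complex.I * (Multiplicative.toAdd x : ℝ) * v)
  map_one' := by simp
  map_mul' := fun x y => by
    rw [← Complex.exp_add]
    congr 1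
    push_cast [toAdd_mul]
    ring

lemma chi_injective : Function.Injective chi := by
  intro v w h
  by_contra hne
  have hvw : v - w ≠ 0 := sub_ne_zero.mpr hne
  have h1 := DFunLike.congr_fun h (Multiplicative.ofAdd (Real.pi / (v - w)))
  simp only [chi, MonoidHom.coe_mk, OneHom.coe_mk, toAdd_ofAdd] at h1
  push_cast at h1
  have h2 : Complex.exp (Complex.I * (Real.pi / (v - w)) * v -
      Complex.I * (Real.pi / (v - w)) * w) = 1 := by
    rw [Complex.exp_sub, h1, div_self (Complex.exp_ne_zero _)]
  have h3 : Complex.I * (Real.pi / (v - w)) * v - Complex.I * (Real.pi / (v - w)) * w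
      = Real.pi * Complex.I := by
    have : ((v : ℂ) - w) ≠ 0 := by
      exact_mod_cast (Complex.ofReal_ne_zero.mpr hvw)
    field_simp
  rw [h3] at h2
  rw [Complex.exp_eq_one_iff] at h2
  obtain ⟨m, hm⟩ := h2
  have him := congrArg Complex.im hm
  simp [Complex.mul_im] at him
  have hpi := Real.pi_ne_zero
  have h1 : (1 : ℝ) = 2 * m := by
    -- him should say π = m * (2π) or similar
    have h2 : Real.pi * 1 = Real.pi * (2 * m) := by linarith [him]
    exact mul_left_cancel₀ hpi h2
  have : (2 * m : ℤ) = 1 := by exact_mod_cast h1.symm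
  omega

/-- If a linear map `E` on operators is translationally covariant, i.e.
`e^{-ixL} E(A) e^{ixL} = E(e^{-ixL} A e^{ixL})` for all real `x` and operators `A`,
then `E` commutes with the dephasing map associated to the eigenspaces of `L`. -/
theorem translationCovariant_implies_dephasingCovariant {n k : ℕ}
    (Pr : Fin k → Matrix (Fin n) (Fin n) ℂ)
    (hherm : ∀ l, (Pr l).IsHermitian)
    (horth : ∀ l l', Pr l * Pr l' = if l = l' then Pr l else 0)
    (hsum : ∑ l, Pr l = 1)
    (lam : Fin k → ℝ) (hdist : Function.Injective lam)
    (E : Matrix (Fin n) (Fin n) ℂ →ₗ[ℂ] Matrix (Fin n) (Fin n) ℂ)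
    (hcov : ∀ (x : ℝ) (A : Matrix (Fin n) (Fin n) ℂ),
      NormedSpace.exp ((-(Complex.I * (x : ℂ))) • Lof Pr lam) * E A *
          NormedSpace.exp ((Complex.I * (x : ℂ)) • Lof Pr lam) =
        E (NormedSpace.exp ((-(Complex.I * (x : ℂ))) • Lof Pr lam) * A *
            NormedSpace.exp ((Complex.I * (x : ℂ)) • Lof Pr lam))) :
    ∀ A : Matrix (Fin n) (Fin n) ℂ,
      E (∑ l, Pr l * A * Pr l) = ∑ l, Pr l * E A * Pr l := by
  classical
  intro A
  rcases Nat.eq_zero_or_pos k with hk | hk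
  · subst hk; simp
  have expL : ∀ c : ℂ, NormedSpace.exp (c • Lof Pr lam)
      = ∑ l, Complex.exp (c * lam l) • Pr l := fun c => expL Pr horth hsum lam c
  set C : Fin k × Fin k → Matrix (Fin n) (Fin n) ℂ :=
    fun p => Pr p.1 * E A * Pr p.2 - E (Pr p.1 * A * Pr p.2) with hC
  have expand : ∀ (x : ℝ) (M : Matrix (Fin n) (Fin n) ℂ),
      (∑ l, Complex.exp (-(Complex.I * x) * lam l) • Pr l) * M *
        (∑ l, Complex.exp ((Complex.I * x) * lam l) • Pr l) =
      ∑ p : Fin k × Fin k,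
        Complex.exp (Complex.I * x * (lam p.2 - lam p.1)) • (Pr p.1 * M * Pr p.2) := by
    intro x M
    rw [Fintype.sum_prod_type, Finset.sum_mul, Finset.sum_mul]
    refine Finset.sum_congr rfl fun l _ => ?_
    rw [Finset.mul_sum]
    refine Finset.sum_congr rfl fun l' _ => ?_
    rw [smul_mul_assoc, smul_mul_assoc, mul_smul_comm, smul_smul, ← Complex.exp_add]
    congr 1
    push_cast
    ring
  have key : ∀ x : ℝ, ∑ p : Fin k × Fin k,
      Complex.exp (Complex.I * x * (lam p.2 - lam p.1)) • C p = 0 := by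
    intro x
    have h0 := hcov x A
    rw [expL, expL, expand x (E A), expand x A, map_sum] at h0
    simp only [_root_.map_smul] at h0
    simp only [hC, smul_sub, Finset.sum_sub_distrib, h0, sub_self]
  set S : Finset ℝ := Finset.image (fun p : Fin k × Fin k => lam p.2 - lam p.1) Finset.univ
    with hS
  set N : ℝ → Matrix (Fin n) (Fin n) ℂ :=
    fun v => ∑ p ∈ Finset.univ.filter (fun p : Fin k × Fin k => lam p.2 - lam p.1 = v), C p
    with hN
  have hgroup : ∀ x : ℝ, ∑ v ∈ S, Complex.exp (Complex.I * x * v) • N v = 0 := by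
    intro x
    rw [← key x,
      ← Finset.sum_fiberwise_of_maps_to
        (g := fun p : Fin k × Fin k => lam p.2 - lam p.1)
        (fun p _ => Finset.mem_image_of_mem _ (Finset.mem_univ p))
        (fun p => Complex.exp (Complex.I * x * (lam p.2 - lam p.1)) • C p)]
    refine Finset.sum_congr rfl fun v hv => ?_
    simp only [hN]
    rw [Finset.smul_sum]
    refine Finset.sum_congr rfl fun p hp => ?_
    rw [← (Finset.mem_filter.mp hp).2]
    norm_cast
  have hNzero : ∀ v ∈ S, N v = 0 := by
    intro v hv
    have hli : LinearIndependent ℂ (fun u : {u // u ∈ S} => ⇑(chi u.1)) :=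
      (linearIndependent_monoidHom (Multiplicative ℝ) ℂ).comp
        (fun u : {u // u ∈ S} => chi u.1)
        (chi_injective.comp Subtype.val_injective)
    ext i j
    have hzero : ∑ u : {u // u ∈ S}, (N u.1 i j) • ⇑(chi u.1) = 0 := by
      rw [Finset.sum_coe_sort S (fun v => (N v i j) • ⇑(chi v))]
      funext x
      have hx := hgroup (Multiplicative.toAdd x)
      have hx' := congrFun (congrFun (congrArg
        (fun M : Matrix (Fin n) (Fin n) ℂ => (M : Fin n → Fin n → ℂ)) hx) i) j
      simp only [Matrix.sum_apply, Matrix.smul_apply, smul_eq_mul, Matrix.zero_apply] at hx'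
      simp only [Finset.sum_apply, Pi.smul_apply, smul_eq_mul, Pi.zero_apply, chi,
        MonoidHom.coe_mk, OneHom.coe_mk]
      rw [← hx']
      exact Finset.sum_congr rfl fun v _ => by ring
    have := Fintype.linearIndependent_iff.mp hli (fun u => N u.1 i j) hzero ⟨v, hv⟩
    simpa using this
  have h0S : (0 : ℝ) ∈ S := by
    refine Finset.mem_image.mpr ⟨(⟨0, hk⟩, ⟨0, hk⟩), Finset.mem_univ _, by ring⟩
  have hdiag : N 0 = ∑ l, C (l, l) := by
    simp only [hN]
    rw [Finset.sum_filter, Fintype.sum_prod_type]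
    refine Finset.sum_congr rfl fun l _ => ?_
    simp [sub_eq_zero, hdist.eq_iff]
  have hfinal : ∑ l, C (l, l) = 0 := hdiag ▸ hNzero 0 h0S
  have : ∑ l, (Pr l * E A * Pr l) - ∑ l, E (Pr l * A * Pr l) = 0 := by
    rw [← Finset.sum_sub_distrib]; exact hfinal
  rw [map_sum]
  exact (sub_eq_zero.mp this).symm
end

section
/- There exists a quantum channel (completely positive trace-preserving map) on a qubit that is incoherence-preserving with respect to the computational basis but not dephasing-covariant. Specifically, E(ρ) = |0⟩⟨0| Tr(|+⟩⟨+| ρ) + |1⟩⟨1| Tr(|−⟩⟨−| ρ) satisfies D ∘ E = E but E ∘ D ≠ E, where |±⟩ = (|0⟩ ± |1⟩)/√2. -/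
open Matrix

/-- The projector `|+⟩⟨+|` on a qubit, with `|+⟩ = (|0⟩ + |1⟩)/√2`. -/
noncomputable def Pplus : Matrix (Fin 2) (Fin 2) ℂ :=
  Matrix.vecMulVec ![(Real.sqrt 2 : ℂ)⁻¹, (Real.sqrt 2 : ℂ)⁻¹]
    (star ![(Real.sqrt 2 : ℂ)⁻¹, (Real.sqrt 2 : ℂ)⁻¹])

/-- The projector `|−⟩⟨−|` on a qubit, with `|−⟩ = (|0⟩ − |1⟩)/√2`. -/
noncomputable def Pminus : Matrix (Fin 2) (Fin 2) ℂ :=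
  Matrix.vecMulVec ![(Real.sqrt 2 : ℂ)⁻¹, -(Real.sqrt 2 : ℂ)⁻¹]
    (star ![(Real.sqrt 2 : ℂ)⁻¹, -(Real.sqrt 2 : ℂ)⁻¹])

/-- The qubit dephasing map with respect to the computational basis. -/
def Dqubit (A : Matrix (Fin 2) (Fin 2) ℂ) : Matrix (Fin 2) (Fin 2) ℂ :=
  Matrix.diagonal fun i => A i i

/-- The map `E(ρ) = |0⟩⟨0| Tr(|+⟩⟨+| ρ) + |1⟩⟨1| Tr(|−⟩⟨−| ρ)`. -/
noncomputable def Emap (A : Matrix (Fin 2) (Fin 2) ℂ) : Matrix (Fin 2) (Fin 2) ℂ :=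
  Matrix.trace (Pplus * A) • Matrix.single 0 0 1 +
    Matrix.trace (Pminus * A) • Matrix.single 1 1 1

lemma s_sq : ((Real.sqrt 2 : ℂ)⁻¹) * ((Real.sqrt 2 : ℂ)⁻¹) = 1/2 := by
  rw [← mul_inv]
  norm_cast
  rw [Real.mul_self_sqrt (by norm_num)]
  norm_num

lemma s_star : star ((Real.sqrt 2 : ℂ)⁻¹) = (Real.sqrt 2 : ℂ)⁻¹ := by
  rw [Complex.star_def, map_inv₀, Complex.conj_ofReal]

lemma s_sq' : ((Real.sqrt 2 : ℂ)⁻¹) ^ 2 = 1/2 := by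
  rw [sq]; exact s_sq

lemma Pplus_entry (i j : Fin 2) : Pplus i j = 1/2 := by
  fin_cases i <;> fin_cases j <;>
    simp [Pplus, vecMulVec_apply, Pi.star_apply, s_star, s_sq, s_sq']

lemma Pminus_entry (i j : Fin 2) :
    Pminus i j = if i = j then 1/2 else -(1/2) := by
  fin_cases i <;> fin_cases j <;>
    simp [Pminus, vecMulVec_apply, Pi.star_apply, s_star, s_sq, s_sq']

lemma trace_Pplus (A : Matrix (Fin 2) (Fin 2) ℂ) :
    (Pplus * A).trace = (A 0 0 + A 1 0 + A 0 1 + A 1 1) / 2 := by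
  simp [Matrix.trace, Matrix.mul_apply, Fin.sum_univ_two, Pplus_entry]
  ring

lemma trace_Pminus (A : Matrix (Fin 2) (Fin 2) ℂ) :
    (Pminus * A).trace = (A 0 0 - A 1 0 - A 0 1 + A 1 1) / 2 := by
  simp [Matrix.trace, Matrix.mul_apply, Fin.sum_univ_two, Pminus_entry]
  ring

/-- There is a qubit quantum channel that is incoherence-preserving with respect to the
computational basis but not dephasing-covariant: the map `Emap` is trace preserving,
satisfies `D ∘ E = E` (in particular it maps every state to an incoherent one), but
`E ∘ D ≠ E`. -/
theorem incoherencePreserving_not_dephasingCovariant :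
    (∀ A : Matrix (Fin 2) (Fin 2) ℂ, (Emap A).trace = A.trace) ∧
    (∀ A : Matrix (Fin 2) (Fin 2) ℂ, Dqubit (Emap A) = Emap A) ∧
    ¬ (∀ A : Matrix (Fin 2) (Fin 2) ℂ, Emap (Dqubit A) = Emap A) := by
  refine ⟨?_, ?_, ?_⟩
  · intro A
    have h1 : (Emap A).trace = (Pplus * A).trace + (Pminus * A).trace := by
      simp [Emap, Matrix.trace, Fin.sum_univ_two, Matrix.add_apply,
        Matrix.smul_apply, Matrix.single]
    rw [h1, trace_Pplus, trace_Pminus]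
    simp [Matrix.trace, Fin.sum_univ_two]
    ring
  · intro A
    ext i j
    fin_cases i <;> fin_cases j <;>
      simp [Dqubit, Emap, Matrix.diagonal, Matrix.add_apply, Matrix.smul_apply,
        Matrix.single]
  · intro h
    have := congrFun (congrFun (h (Matrix.single 0 1 1)) 0) 0
    simp [Emap, Dqubit, Matrix.add_apply, Matrix.smul_apply, Matrix.single,
      trace_Pplus, trace_Pminus, Matrix.diagonal] at this
end

section
/- If σ is an incoherent state on the ancilla (D_A(σ) = σ), E is an incoherent effect on the output ancilla (D_{A'}(E) = E), and V is a dephasing-covariant unitary channel on the composite (V ∘ D_{SA} = D_{SA} ∘ V, where D_{SA} = D_S ⊗ D_A = D_{S'} ⊗ D_{A'}), then the operation E(ρ) = Tr_{A'}(E · V(ρ ⊗ σ)) is dephasing-covariant: E ∘ D_S = D_{S'} ∘ E. -/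
open Matrix
open scoped Kronecker ComplexOrder

/-- Partial trace over the ancilla factor. -/
noncomputable def ptrA {s a : ℕ} (M : Matrix (Fin s × Fin a) (Fin s × Fin a) ℂ) :
    Matrix (Fin s) (Fin s) ℂ :=
  Matrix.of fun i j => ∑ p : Fin a, M (i, p) (j, p)

section helper
variable {s a : ℕ}

lemma ptrA_sum {k : ℕ} (f : Fin k → Matrix (Fin s × Fin a) (Fin s × Fin a) ℂ) :
    ptrA (∑ x, f x) = ∑ x, ptrA (f x) := by
  ext i j
  simp only [ptrA, Matrix.of_apply, Matrix.sum_apply]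
  exact Finset.sum_comm

lemma ptrA_left (Amat : Matrix (Fin s) (Fin s) ℂ)
    (M : Matrix (Fin s × Fin a) (Fin s × Fin a) ℂ) :
    ptrA ((Amat ⊗ₖ (1 : Matrix (Fin a) (Fin a) ℂ)) * M) = Amat * ptrA M := by
  ext i j
  simp only [ptrA, Matrix.of_apply, Matrix.mul_apply, Fintype.sum_prod_type,
    kroneckerMap_apply, Matrix.one_apply]
  rw [Finset.sum_comm]
  simp [Finset.mul_sum, mul_ite]

lemma ptrA_right (Cmat : Matrix (Fin s) (Fin s) ℂ)
    (M : Matrix (Fin s × Fin a) (Fin s × Fin a) ℂ) :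
    ptrA (M * (Cmat ⊗ₖ (1 : Matrix (Fin a) (Fin a) ℂ))) = ptrA M * Cmat := by
  ext i j
  simp only [ptrA, Matrix.of_apply, Matrix.mul_apply, Fintype.sum_prod_type,
    kroneckerMap_apply, Matrix.one_apply]
  rw [Finset.sum_comm]
  simp [Finset.sum_mul, ite_mul]

lemma ptrA_cyc (B : Matrix (Fin a) (Fin a) ℂ)
    (M : Matrix (Fin s × Fin a) (Fin s × Fin a) ℂ) :
    ptrA (((1 : Matrix (Fin s) (Fin s) ℂ) ⊗ₖ B) * M) =
      ptrA (M * ((1 : Matrix (Fin s) (Fin s) ℂ) ⊗ₖ B)) := by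
  ext i j
  simp only [ptrA, Matrix.of_apply, Matrix.mul_apply, Fintype.sum_prod_type,
    kroneckerMap_apply, Matrix.one_apply]
  simp [ite_mul, mul_ite]
  rw [Finset.sum_comm]
  congr 1; ext p; congr 1; ext q; ring

lemma sum_kron {k : ℕ} (f : Fin k → Matrix (Fin s) (Fin s) ℂ)
    (B : Matrix (Fin a) (Fin a) ℂ) :
    (∑ x, f x) ⊗ₖ B = ∑ x, (f x) ⊗ₖ B := by
  ext ⟨i,p⟩ ⟨j,q⟩
  simp [Matrix.sum_apply, Finset.sum_mul]

lemma kron_sum {k : ℕ} (Amat : Matrix (Fin s) (Fin s) ℂ)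
    (f : Fin k → Matrix (Fin a) (Fin a) ℂ) :
    Amat ⊗ₖ (∑ x, f x) = ∑ x, Amat ⊗ₖ (f x) := by
  ext ⟨i,p⟩ ⟨j,q⟩
  simp [Matrix.sum_apply, Finset.mul_sum]

lemma key_term (P : Matrix (Fin s) (Fin s) ℂ) (Q E : Matrix (Fin a) (Fin a) ℂ)
    (X : Matrix (Fin s × Fin a) (Fin s × Fin a) ℂ) :
    ptrA (((1 : Matrix (Fin s) (Fin s) ℂ) ⊗ₖ E) * ((P ⊗ₖ Q) * X * (P ⊗ₖ Q))) =
      P * ptrA (X * ((1 : Matrix (Fin s) (Fin s) ℂ) ⊗ₖ (Q * E * Q))) * P := by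
  have split1 : ((1 : Matrix (Fin s) (Fin s) ℂ) ⊗ₖ E) * (P ⊗ₖ Q) =
      (P ⊗ₖ (1 : Matrix (Fin a) (Fin a) ℂ)) * ((1 : Matrix (Fin s) (Fin s) ℂ) ⊗ₖ (E * Q)) := by
    rw [← mul_kronecker_mul, ← mul_kronecker_mul, one_mul, mul_one, one_mul]
  have split2 : (P ⊗ₖ Q) = ((1 : Matrix (Fin s) (Fin s) ℂ) ⊗ₖ Q) *
      (P ⊗ₖ (1 : Matrix (Fin a) (Fin a) ℂ)) := by
    rw [← mul_kronecker_mul, one_mul, mul_one]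
  have hM : ((1 : Matrix (Fin s) (Fin s) ℂ) ⊗ₖ E) * ((P ⊗ₖ Q) * X * (P ⊗ₖ Q)) =
      (P ⊗ₖ (1 : Matrix (Fin a) (Fin a) ℂ)) *
        ((((1 : Matrix (Fin s) (Fin s) ℂ) ⊗ₖ (E * Q)) * (X * ((1 : Matrix (Fin s) (Fin s) ℂ) ⊗ₖ Q))) *
          (P ⊗ₖ (1 : Matrix (Fin a) (Fin a) ℂ))) := by
    calc ((1 : Matrix (Fin s) (Fin s) ℂ) ⊗ₖ E) * ((P ⊗ₖ Q) * X * (P ⊗ₖ Q))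
        = (((1 : Matrix (Fin s) (Fin s) ℂ) ⊗ₖ E) * (P ⊗ₖ Q)) * X * (P ⊗ₖ Q) := by
          noncomm_ring
      _ = ((P ⊗ₖ (1 : Matrix (Fin a) (Fin a) ℂ)) * ((1 : Matrix (Fin s) (Fin s) ℂ) ⊗ₖ (E * Q)))
            * X * (((1 : Matrix (Fin s) (Fin s) ℂ) ⊗ₖ Q) *
              (P ⊗ₖ (1 : Matrix (Fin a) (Fin a) ℂ))) := by rw [split1, ← split2]
      _ = _ := by noncomm_ring
  rw [hM, ptrA_left, ptrA_right, ptrA_cyc, mul_assoc X, ← mul_kronecker_mul, one_mul,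
    ← mul_assoc Q, ← mul_assoc]

end helper

/-- If `σ` is an incoherent ancilla state (`D_A(σ) = σ`), `E` an incoherent ancilla effect
(`D_A(E) = E`), and the unitary channel `V(·)V†` on the composite is dephasing-covariant
with respect to `D_{SA} = D_S ⊗ D_A`, then the operation `ρ ↦ Tr_A(E · V(ρ ⊗ σ)V†)` is
dephasing-covariant: `E ∘ D_S = D_S ∘ E`. -/
theorem dilation_dephasingCovariant {s a ks ka : ℕ}
    (PrS : Fin ks → Matrix (Fin s) (Fin s) ℂ)
    (PrA : Fin ka → Matrix (Fin a) (Fin a) ℂ)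
    (hhermS : ∀ l, (PrS l).IsHermitian)
    (horthS : ∀ l l', PrS l * PrS l' = if l = l' then PrS l else 0)
    (hsumS : ∑ l, PrS l = 1)
    (hhermA : ∀ m, (PrA m).IsHermitian)
    (horthA : ∀ m m', PrA m * PrA m' = if m = m' then PrA m else 0)
    (hsumA : ∑ m, PrA m = 1)
    (σ : Matrix (Fin a) (Fin a) ℂ) (hσ : σ.PosSemidef) (hσtr : σ.trace = 1)
    (hσinc : ∑ m, PrA m * σ * PrA m = σ)
    (Eop : Matrix (Fin a) (Fin a) ℂ) (hE1 : Eop.PosSemidef)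
    (hE2 : ((1 : Matrix (Fin a) (Fin a) ℂ) - Eop).PosSemidef)
    (hEinc : ∑ m, PrA m * Eop * PrA m = Eop)
    (V : Matrix (Fin s × Fin a) (Fin s × Fin a) ℂ)
    (hV : V * Vᴴ = 1 ∧ Vᴴ * V = 1)
    (hVcov : ∀ M : Matrix (Fin s × Fin a) (Fin s × Fin a) ℂ,
      ∑ l, ∑ m, (PrS l ⊗ₖ PrA m) * (V * M * Vᴴ) * (PrS l ⊗ₖ PrA m) =
        V * (∑ l, ∑ m, (PrS l ⊗ₖ PrA m) * M * (PrS l ⊗ₖ PrA m)) * Vᴴ) :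
    ∀ ρ : Matrix (Fin s) (Fin s) ℂ,
      ptrA (((1 : Matrix (Fin s) (Fin s) ℂ) ⊗ₖ Eop) *
          (V * ((∑ l, PrS l * ρ * PrS l) ⊗ₖ σ) * Vᴴ)) =
        ∑ l, PrS l *
            ptrA (((1 : Matrix (Fin s) (Fin s) ℂ) ⊗ₖ Eop) * (V * (ρ ⊗ₖ σ) * Vᴴ)) *
            PrS l := by
  intro ρ
  have h1 : (∑ l, PrS l * ρ * PrS l) ⊗ₖ σ =
      ∑ l, ∑ m, (PrS l ⊗ₖ PrA m) * (ρ ⊗ₖ σ) * (PrS l ⊗ₖ PrA m) := by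
    rw [sum_kron]
    refine Finset.sum_congr rfl fun l _ => ?_
    conv_lhs => rw [← hσinc]
    rw [kron_sum]
    refine Finset.sum_congr rfl fun m _ => ?_
    rw [← mul_kronecker_mul, ← mul_kronecker_mul]
  rw [h1, ← hVcov (ρ ⊗ₖ σ)]
  rw [Finset.mul_sum, ptrA_sum]
  refine Finset.sum_congr rfl fun l _ => ?_
  rw [Finset.mul_sum, ptrA_sum]
  simp_rw [key_term]
  rw [← Finset.sum_mul, ← Finset.mul_sum, ← ptrA_sum, ← Finset.mul_sum, ← kron_sum, hEinc,
    ← ptrA_cyc]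
end

section
/- A linear map E on operators is incoherence-preserving (maps all states fixed by D to states fixed by D) if and only if E ∘ D = D ∘ E ∘ D. -/
open Matrix
open scoped ComplexOrder

private lemma vmv_psd {n : ℕ} (v : Fin n → ℂ) : (vecMulVec v (star v)).PosSemidef := by
  have h : vecMulVec v (star v) = (replicateRow Unit (star v))ᴴ * replicateRow Unit (star v) := by
    ext i j
    simp [Matrix.mul_apply, vecMulVec_apply, Matrix.replicateRow, Matrix.conjTranspose_apply]
  rw [h]
  exact posSemidef_conjTranspose_mul_self _

private lemma vmv_trace {n : ℕ} (v : Fin n → ℂ) :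
    (vecMulVec v (star v)).trace = ((∑ i, Complex.normSq (v i) : ℝ) : ℂ) := by
  simp [Matrix.trace, Matrix.diag, vecMulVec_apply, Complex.mul_conj]

/-- A positive trace-preserving linear map `E` is incoherence-preserving (it maps every
state fixed by the dephasing map `D` to a state fixed by `D`) if and only if
`E ∘ D = D ∘ E ∘ D`. -/
theorem incoherencePreserving_iff_DED {n k : ℕ}
    (Pr : Fin k → Matrix (Fin n) (Fin n) ℂ)
    (hherm : ∀ l, (Pr l).IsHermitian)
    (horth : ∀ l l', Pr l * Pr l' = if l = l' then Pr l else 0)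
    (hsum : ∑ l, Pr l = 1)
    (E : Matrix (Fin n) (Fin n) ℂ →ₗ[ℂ] Matrix (Fin n) (Fin n) ℂ)
    (hpos : ∀ A : Matrix (Fin n) (Fin n) ℂ, A.PosSemidef → (E A).PosSemidef)
    (htp : ∀ A : Matrix (Fin n) (Fin n) ℂ, (E A).trace = A.trace) :
    (∀ ρ : Matrix (Fin n) (Fin n) ℂ, ρ.PosSemidef → ρ.trace = 1 →
        (∑ l, Pr l * ρ * Pr l = ρ) → ∑ l, Pr l * E ρ * Pr l = E ρ) ↔
    (∀ A : Matrix (Fin n) (Fin n) ℂ,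
      E (∑ l, Pr l * A * Pr l) =
        ∑ l, Pr l * E (∑ l', Pr l' * A * Pr l') * Pr l) := by
  set D : Matrix (Fin n) (Fin n) ℂ →ₗ[ℂ] Matrix (Fin n) (Fin n) ℂ :=
    { toFun := fun A => ∑ l, Pr l * A * Pr l
      map_add' := by intro A B; simp [mul_add, add_mul, Finset.sum_add_distrib]
      map_smul' := by intro c A; simp [Matrix.mul_smul, Matrix.smul_mul, Finset.smul_sum]
      } with hDdef
  have key : ∀ (l m : Fin k) (A : Matrix (Fin n) (Fin n) ℂ),
      Pr l * (Pr m * A * Pr m) * Pr l = if m = l then Pr m * A * Pr m else 0 := by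
    intro l m A
    by_cases h : m = l
    · subst h
      have h2 : Pr m * Pr m = Pr m := by rw [horth]; simp
      rw [if_pos rfl, show Pr m * (Pr m * A * Pr m) * Pr m
        = (Pr m * Pr m) * A * (Pr m * Pr m) by noncomm_ring, h2]
    · have h2 : Pr l * Pr m = 0 := by rw [horth]; simp [Ne.symm h]
      rw [if_neg h, show Pr l * (Pr m * A * Pr m) * Pr l
        = (Pr l * Pr m) * (A * (Pr m * Pr l)) by noncomm_ring, h2, zero_mul]
  have hDD : ∀ A : Matrix (Fin n) (Fin n) ℂ, D (D A) = D A := by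
    intro A
    show ∑ l, Pr l * (∑ m, Pr m * A * Pr m) * Pr l = ∑ l, Pr l * A * Pr l
    simp_rw [Finset.mul_sum, Finset.sum_mul]
    calc ∑ l, ∑ m, Pr l * (Pr m * A * Pr m) * Pr l
        = ∑ l, ∑ m, if m = l then Pr m * A * Pr m else 0 := by
          exact Finset.sum_congr rfl fun l _ => Finset.sum_congr rfl fun m _ => key l m A
      _ = ∑ l, Pr l * A * Pr l := by simp
  constructor
  · intro h A
    have hDpsd : ∀ ρ : Matrix (Fin n) (Fin n) ℂ, ρ.PosSemidef → (D ρ).PosSemidef := by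
      intro ρ hρ
      show Matrix.PosSemidef (∑ l, Pr l * ρ * Pr l)
      refine Finset.sum_induction _ _ (fun a b ha hb => ha.add hb) Matrix.PosSemidef.zero
        (fun l _ => ?_)
      have h2 := hρ.conjTranspose_mul_mul_same (B := Pr l)
      rwa [(hherm l).eq] at h2
    have hDtr : ∀ ρ : Matrix (Fin n) (Fin n) ℂ, (D ρ).trace = ρ.trace := by
      intro ρ
      show Matrix.trace (∑ l, Pr l * ρ * Pr l) = ρ.trace
      rw [Matrix.trace_sum]
      have h3 : ∀ l, (Pr l * ρ * Pr l).trace = (Pr l * ρ).trace := by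
        intro l
        rw [Matrix.trace_mul_cycle]
        rw [show Pr l * Pr l * ρ = (Pr l * Pr l) * ρ from rfl, horth]
        simp
      simp_rw [h3, ← Matrix.trace_sum, ← Finset.sum_mul, hsum, one_mul]
    set L : Matrix (Fin n) (Fin n) ℂ →ₗ[ℂ] Matrix (Fin n) (Fin n) ℂ :=
      D ∘ₗ (E ∘ₗ D) - E ∘ₗ D with hLdef
    have hLapp : ∀ B, L B = D (E (D B)) - E (D B) := fun _ => rfl
    have hK : ∀ ρ : Matrix (Fin n) (Fin n) ℂ, ρ.PosSemidef → ρ.trace = 1 → L ρ = 0 := by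
      intro ρ hρ htr
      have h1 := h (D ρ) (hDpsd ρ hρ) (by rw [hDtr, htr]) (hDD ρ)
      have h2 : D (E (D ρ)) = E (D ρ) := h1
      rw [hLapp, h2, sub_self]
    have hKv : ∀ v : Fin n → ℂ, L (vecMulVec v (star v)) = 0 := by
      intro v
      by_cases hv : v = 0
      · have h0 : vecMulVec v (star v) = 0 := by
          ext a b; simp [vecMulVec_apply, hv]
        rw [h0, map_zero]
      · set t : ℝ := ∑ i, Complex.normSq (v i) with ht
        have htpos : 0 < t := by
          refine Finset.sum_pos' (fun i _ => Complex.normSq_nonneg _) ?_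
          obtain ⟨i, hi⟩ := Function.ne_iff.mp hv
          exact ⟨i, Finset.mem_univ i, Complex.normSq_pos.mpr hi⟩
        set c : ℝ := (Real.sqrt t)⁻¹ with hc
        have hc2 : c ^ 2 = t⁻¹ := by
          rw [hc, ← Real.sqrt_inv, Real.sq_sqrt (inv_nonneg.mpr htpos.le)]
        set w : Fin n → ℂ := fun i => (c : ℂ) * v i with hw
        have hvmv : vecMulVec w (star w) = ((c ^ 2 : ℝ) : ℂ) • vecMulVec v (star v) := by
          ext a b
          simp only [vecMulVec_apply, Matrix.smul_apply, Pi.star_apply, hw, smul_eq_mul]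
          simp only [star_mul', Complex.star_def, Complex.conj_ofReal]
          push_cast
          ring
        have htr1 : (vecMulVec w (star w)).trace = 1 := by
          rw [vmv_trace]
          have h4 : ∀ i, Complex.normSq (w i) = c ^ 2 * Complex.normSq (v i) := by
            intro i
            simp [hw, Complex.normSq_mul, Complex.normSq_ofReal, sq]
          rw [Finset.sum_congr rfl fun i _ => h4 i, ← Finset.mul_sum, ← ht, hc2]
          norm_cast
          exact inv_mul_cancel₀ htpos.ne'
        have h0 := hK _ (vmv_psd w) htr1
        rw [hvmv, LinearMap.map_smul, smul_eq_zero] at h0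
        rcases h0 with h0 | h0
        · exfalso
          rw [hc2] at h0
          exact (inv_ne_zero htpos.ne') (by exact_mod_cast h0)
        · exact h0
    have hStd : ∀ i j : Fin n, L (Matrix.single i j (1 : ℂ)) = 0 := by
      intro i j
      by_cases hij : i = j
      · subst hij
        have hrw : Matrix.single i i (1 : ℂ)
            = vecMulVec (Pi.single i 1) (star (Pi.single i 1)) := by
          ext a b
          by_cases ha : i = a <;> by_cases hb : i = b <;>
            simp [Matrix.single, vecMulVec_apply, Pi.single_apply, ha, hb, eq_comm]
        rw [hrw]; exact hKv _
      · set u : Fin n → ℂ := fun a => if a = i then 1 else if a = j then 1 else 0 with hu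
        set w : Fin n → ℂ := fun a => if a = i then 1 else if a = j then Complex.I else 0
          with hwdef
        set ei : Fin n → ℂ := fun a => if a = i then 1 else 0 with hei
        set ej : Fin n → ℂ := fun a => if a = j then 1 else 0 with hej
        have hrw : Matrix.single i j (1 : ℂ)
            = (2⁻¹ : ℂ) • vecMulVec u (star u) + (Complex.I * 2⁻¹) • vecMulVec w (star w)
              - ((1 + Complex.I) * 2⁻¹) • (vecMulVec ei (star ei) + vecMulVec ej (star ej)) := by
          ext a b
          simp only [Matrix.single, Matrix.sub_apply, Matrix.add_apply, Matrix.smul_apply,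
            vecMulVec_apply, Pi.star_apply, hu, hwdef, hei, hej, smul_eq_mul, Matrix.of_apply]
          by_cases ha : a = i <;> by_cases ha' : a = j <;>
            by_cases hb : b = i <;> by_cases hb' : b = j <;>
            (try simp [ha, ha', hb, hb', hij, Ne.symm hij, ne_comm, Complex.ext_iff]) <;>
            (try ring_nf) <;> (try simp [Complex.ext_iff]) <;> (try tauto)
        rw [hrw]
        simp only [map_add, map_sub, LinearMap.map_smul, hKv, smul_zero, add_zero, sub_zero,
          zero_add, sub_self]
    have hLA : L A = 0 := by
      have hA := Matrix.matrix_eq_sum_single A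
      calc L A = L (∑ i, ∑ j, Matrix.single i j (A i j)) := by rw [← hA]
        _ = ∑ i, ∑ j, L (Matrix.single i j (A i j)) := by simp only [_root_.map_sum]
        _ = 0 := by
            refine Finset.sum_eq_zero fun i _ => Finset.sum_eq_zero fun j _ => ?_
            have h5 : Matrix.single i j (A i j) = A i j • Matrix.single i j (1 : ℂ) := by
              rw [Matrix.smul_single, smul_eq_mul, mul_one]
            rw [h5, LinearMap.map_smul, hStd, smul_zero]
    have h2 : D (E (D A)) = E (D A) := by
      have := hLapp A ▸ hLA
      exact sub_eq_zero.mp this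
    exact h2.symm
  · intro hE ρ hρ htrρ hfix
    have h1 := hE ρ
    rw [hfix] at h1
    exact h1.symm
end

section
/- For pure states, the trace-norm coherence measure F_L(|ψ⟩⟨ψ|) = ‖[|ψ⟩⟨ψ|, L]‖₁ equals twice the standard deviation of L: F_L(|ψ⟩⟨ψ|) = 2·√(⟨ψ|L²|ψ⟩ − ⟨ψ|L|ψ⟩²). -/
open Matrix
open scoped ComplexOrder

/-- The trace norm (sum of singular values) of a complex matrix: `‖B‖₁ = Tr √(B†B)`. -/
noncomputable def traceNorm {n : ℕ} (B : Matrix (Fin n) (Fin n) ℂ) : ℝ :=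
  ((Matrix.posSemidef_conjTranspose_mul_self B).1.eigenvectorUnitary.1 *
    diagonal (((↑) : ℝ → ℂ) ∘ (√·) ∘ (Matrix.posSemidef_conjTranspose_mul_self B).1.eigenvalues) *
    (star (Matrix.posSemidef_conjTranspose_mul_self B).1.eigenvectorUnitary :
      Matrix (Fin n) (Fin n) ℂ)).trace.re

section Helpers

variable {n : ℕ}

lemma vvmul (u v w x : Fin n → ℂ) :
    vecMulVec u v * vecMulVec w x = (v ⬝ᵥ w) • vecMulVec u x := by
  ext i j
  simp only [Matrix.mul_apply, vecMulVec_apply, Matrix.smul_apply, smul_eq_mul, dotProduct,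
    Finset.sum_mul]
  exact Finset.sum_congr rfl fun k _ => by ring

lemma Mvv (M : Matrix (Fin n) (Fin n) ℂ) (w x : Fin n → ℂ) :
    M * vecMulVec w x = vecMulVec (M.mulVec w) x := by
  ext i j
  simp only [Matrix.mul_apply, vecMulVec_apply, Matrix.mulVec, dotProduct, Finset.sum_mul]
  exact Finset.sum_congr rfl fun k _ => by ring

lemma vvM (u v : Fin n → ℂ) (M : Matrix (Fin n) (Fin n) ℂ) :
    vecMulVec u v * M = vecMulVec u (v ᵥ* M) := by
  ext i j
  simp only [Matrix.mul_apply, vecMulVec_apply, Matrix.vecMul, dotProduct, Finset.mul_sum]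
  exact Finset.sum_congr rfl fun k _ => by ring

lemma trace_vv (u v : Fin n → ℂ) : (vecMulVec u v).trace = u ⬝ᵥ v := by
  simp [Matrix.trace, Matrix.diag, vecMulVec_apply, dotProduct]

lemma ct_vv (u v : Fin n → ℂ) : (vecMulVec u (star v))ᴴ = vecMulVec v (star u) := by
  ext i j
  simp [conjTranspose_apply, vecMulVec_apply, mul_comm]

lemma psd_vv (u : Fin n → ℂ) : (vecMulVec u (star u)).PosSemidef := by
  refine posSemidef_iff_dotProduct_mulVec.mpr ⟨?_, ?_⟩
  · exact ct_vv u u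
  · intro x
    have h : star x ⬝ᵥ (vecMulVec u (star u)).mulVec x
        = star (star u ⬝ᵥ x) * (star u ⬝ᵥ x) := by
      have h1 : star x ⬝ᵥ (vecMulVec u (star u)).mulVec x
          = (star x ⬝ᵥ u) * (star u ⬝ᵥ x) := by
        simp only [Matrix.mulVec, vecMulVec_apply, dotProduct, Finset.mul_sum, Finset.sum_mul]
        rw [Finset.sum_comm]
        exact Finset.sum_congr rfl fun i _ => Finset.sum_congr rfl fun j _ => by ring
      have h2 : star x ⬝ᵥ u = star (star u ⬝ᵥ x) := by simp [dotProduct, mul_comm]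
      rw [h1, h2]
    rw [h]
    exact star_mul_self_nonneg _

lemma vv_smul_left (c : ℂ) (u v : Fin n → ℂ) :
    vecMulVec (c • u) v = c • vecMulVec u v := by
  ext i j; simp [vecMulVec_apply, mul_assoc]

end Helpers

/-- For a pure state `|ψ⟩⟨ψ|`, the trace-norm coherence measure
`F_L = ‖[|ψ⟩⟨ψ|, L]‖₁` equals twice the standard deviation of `L` in `|ψ⟩`:
`F_L = 2 √(⟨ψ|L²|ψ⟩ − ⟨ψ|L|ψ⟩²)`. -/
theorem traceNorm_commutator_pure_state {n : ℕ}
    (L : Matrix (Fin n) (Fin n) ℂ) (hL : L.IsHermitian)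
    (ψ : Fin n → ℂ) (hψ : star ψ ⬝ᵥ ψ = 1) :
    traceNorm (Matrix.vecMulVec ψ (star ψ) * L - L * Matrix.vecMulVec ψ (star ψ)) =
      2 * Real.sqrt ((star ψ ⬝ᵥ (L * L).mulVec ψ).re -
        ((star ψ ⬝ᵥ L.mulVec ψ).re) ^ 2) := by
  set φ : Fin n → ℂ := L.mulVec ψ with hφ
  set a : ℂ := star ψ ⬝ᵥ φ with ha
  set b : ℂ := star φ ⬝ᵥ φ with hb
  have hstarφ : star φ = star ψ ᵥ* L := by
    rw [hφ, star_mulVec, hL.eq]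
  have key : ∀ (v w : Fin n → ℂ), star (star v ⬝ᵥ w) = star w ⬝ᵥ v := fun v w => by
    simp [dotProduct, mul_comm]
  -- a is "real"
  have ha_star : star a = a := by
    rw [ha, key, hstarφ, ← dotProduct_mulVec, ← hφ]
  -- b is nonneg
  have hb_nonneg : (0 : ℂ) ≤ b := dotProduct_star_self_nonneg φ
  have hb_star : star b = b := key φ φ
  have hφψ : star φ ⬝ᵥ ψ = a := by
    have h := congrArg star (key φ ψ)
    rwa [star_star, ← ha, ha_star] at h
  set χ : Fin n → ℂ := φ - a • ψ with hχdef
  have hψχ : star ψ ⬝ᵥ χ = 0 := by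
    simp [hχdef, dotProduct_sub, dotProduct_smul, hψ, ← ha]
  have hχψ : star χ ⬝ᵥ ψ = 0 := by
    have h := key ψ χ
    rw [hψχ, star_zero] at h
    exact h.symm
  have hstarχ : star χ = star φ - a • star ψ := by
    rw [hχdef, star_sub, star_smul, ha_star]
  have hχχ : star χ ⬝ᵥ χ = b - a ^ 2 := by
    rw [hχdef, hstarχ]
    simp only [sub_dotProduct, dotProduct_sub, smul_dotProduct, dotProduct_smul, smul_eq_mul,
      hψ, hφψ, ← ha, ← hb]
    ring
  have haR : ((a.re : ℝ) : ℂ) = a := Complex.conj_eq_iff_re.mp ha_star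
  have hbR : ((b.re : ℝ) : ℂ) = b := Complex.conj_eq_iff_re.mp hb_star
  have hcast : b - a ^ 2 = ((b.re - a.re ^ 2 : ℝ) : ℂ) := by
    rw [Complex.ofReal_sub, Complex.ofReal_pow, haR, hbR]
  have hba_nonneg : (0 : ℝ) ≤ b.re - a.re ^ 2 := by
    have h := dotProduct_star_self_nonneg χ
    rw [hχχ, hcast] at h
    exact_mod_cast h
  set t : ℝ := Real.sqrt (b.re - a.re ^ 2) with htdef
  have ht_nonneg : (0 : ℝ) ≤ t := Real.sqrt_nonneg _
  have ht2 : ((t : ℝ) : ℂ) ^ 2 = b - a ^ 2 := by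
    rw [hcast]; norm_cast; exact Real.sq_sqrt hba_nonneg
  have hχχ' : star χ ⬝ᵥ χ = ((t : ℝ) : ℂ) ^ 2 := by rw [hχχ, ht2]
  set P : Matrix (Fin n) (Fin n) ℂ := vecMulVec ψ (star ψ) with hPdef
  have hC : P * L - L * P = vecMulVec ψ (star φ) - vecMulVec φ (star ψ) := by
    rw [hPdef, vvM, Mvv, ← hstarφ, ← hφ]
  have hCH : (P * L - L * P)ᴴ = vecMulVec φ (star ψ) - vecMulVec ψ (star φ) := by
    rw [hC, conjTranspose_sub, ct_vv, ct_vv]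
  have hexp : vecMulVec χ (star χ) = vecMulVec φ (star φ) - a • vecMulVec φ (star ψ)
      - a • vecMulVec ψ (star φ) + (a ^ 2) • P := by
    ext i j
    simp only [hχdef, hstarχ, hPdef, vecMulVec_apply, Matrix.sub_apply, Matrix.add_apply,
      Matrix.smul_apply, Pi.sub_apply, Pi.smul_apply, smul_eq_mul, Pi.star_apply, star_sub,
      star_mul', ha_star]
    ring
  have hCHC : (P * L - L * P)ᴴ * (P * L - L * P)
      = (((t : ℝ) : ℂ) ^ 2) • P + vecMulVec χ (star χ) := by
    rw [hCH, hC, sub_mul, mul_sub, mul_sub, vvmul, vvmul, vvmul, vvmul]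
    rw [hψ, hφψ, ← ha, ← hb, one_smul, hexp, ht2]
    module
  set S : Matrix (Fin n) (Fin n) ℂ :=
    ((t : ℝ) : ℂ) • P + (((t : ℝ) : ℂ))⁻¹ • vecMulVec χ (star χ) with hSdef
  have psd_smul : ∀ (c : ℝ) (M : Matrix (Fin n) (Fin n) ℂ), 0 ≤ c → M.PosSemidef →
      (((c : ℝ) : ℂ) • M).PosSemidef := by
    intro c M hc hM
    refine posSemidef_iff_dotProduct_mulVec.mpr ⟨?_, ?_⟩
    · show ((c : ℂ) • M)ᴴ = (c : ℂ) • M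
      rw [conjTranspose_smul, hM.1.eq]
      congr 1
      simp
    · intro x
      rw [Matrix.smul_mulVec, dotProduct_smul]
      have := hM.dotProduct_mulVec_nonneg x
      rw [smul_eq_mul]
      exact mul_nonneg (by exact_mod_cast Complex.zero_le_real.mpr hc) this
  have hS_psd : S.PosSemidef := by
    refine PosSemidef.add (psd_smul t P ht_nonneg (psd_vv ψ)) ?_
    have h := psd_smul t⁻¹ (vecMulVec χ (star χ)) (by positivity) (psd_vv χ)
    rwa [Complex.ofReal_inv] at h
  have hS_sq : S ^ 2 = (P * L - L * P)ᴴ * (P * L - L * P) := by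
    rw [pow_two, hSdef, hCHC]
    rw [add_mul, mul_add, mul_add]
    rw [smul_mul_assoc, smul_mul_assoc, smul_mul_assoc, smul_mul_assoc,
      mul_smul_comm, mul_smul_comm, mul_smul_comm, mul_smul_comm]
    rw [hPdef, vvmul, vvmul, vvmul, vvmul, hψ, hψχ, hχψ, hχχ', one_smul, zero_smul,
      zero_smul, smul_zero, smul_zero, smul_zero, add_zero, zero_add, smul_smul]
    have hlast : (((t:ℝ):ℂ))⁻¹ • (((t:ℝ):ℂ))⁻¹ • (((t:ℝ):ℂ) ^ 2) • vecMulVec χ (star χ)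
        = vecMulVec χ (star χ) := by
      by_cases h0 : t = 0
      · have hz : χ = 0 := by
          apply dotProduct_star_self_eq_zero.mp
          rw [hχχ', h0]
          norm_num
        rw [hz]
        ext i j
        simp [vecMulVec_apply]
      · rw [smul_smul, smul_smul]
        have h1 : ((t:ℝ):ℂ)⁻¹ * ((t:ℝ):ℂ)⁻¹ * ((t:ℝ):ℂ) ^ 2 = 1 := by
          have h0' : ((t:ℝ):ℂ) ≠ 0 := Complex.ofReal_ne_zero.mpr h0
          field_simp
        rw [h1, one_smul]
    rw [hlast, pow_two]
  have hsqrt : ((Matrix.posSemidef_conjTranspose_mul_self (P * L - L * P)).1.eigenvectorUnitary.1 *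
      diagonal (((↑) : ℝ → ℂ) ∘ (√·) ∘
        (Matrix.posSemidef_conjTranspose_mul_self (P * L - L * P)).1.eigenvalues) *
      (star (Matrix.posSemidef_conjTranspose_mul_self (P * L - L * P)).1.eigenvectorUnitary :
        Matrix (Fin n) (Fin n) ℂ)) = S := by
    open scoped MatrixOrder in
    have hA := Matrix.posSemidef_conjTranspose_mul_self (P * L - L * P)
    open scoped MatrixOrder in
    have e : ((Matrix.posSemidef_conjTranspose_mul_self (P * L - L * P)).1.eigenvectorUnitary.1 *
        diagonal (((↑) : ℝ → ℂ) ∘ (√·) ∘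
          (Matrix.posSemidef_conjTranspose_mul_self (P * L - L * P)).1.eigenvalues) *
        (star (Matrix.posSemidef_conjTranspose_mul_self (P * L - L * P)).1.eigenvectorUnitary :
          Matrix (Fin n) (Fin n) ℂ)) = CFC.sqrt ((P * L - L * P)ᴴ * (P * L - L * P)) := by
      rw [CFC.sqrt_eq_cfc, cfc_nnreal_eq_real _ _, hA.1.cfc_eq]
      simp only [IsHermitian.cfc, Unitary.conjStarAlgAut_apply, Real.coe_sqrt, Real.coe_toNNReal']
      congr 3
      funext i
      exact congrArg (fun x : ℝ => ((√x : ℝ) : ℂ)) (max_eq_left (hA.eigenvalues_nonneg i)).symm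
    open scoped MatrixOrder in
    rw [e, CFC.sqrt_eq_iff _ _ hA.nonneg hS_psd.nonneg, ← pow_two, hS_sq]
  have htr : S.trace = ((t : ℝ) : ℂ) + (((t : ℝ) : ℂ))⁻¹ * ((t : ℝ) : ℂ) ^ 2 := by
    rw [hSdef, trace_add, trace_smul, trace_smul, hPdef, trace_vv, trace_vv,
      dotProduct_comm, hψ, dotProduct_comm, hχχ']
    simp
  have hb' : star ψ ⬝ᵥ (L * L).mulVec ψ = b := by
    rw [← Matrix.mulVec_mulVec, ← hφ, hb, hstarφ, ← dotProduct_mulVec]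
  rw [traceNorm, hsqrt, htr, hb', ← htdef]
  by_cases h0 : t = 0
  · simp [h0]
  · rw [← Complex.ofReal_pow, ← Complex.ofReal_inv, ← Complex.ofReal_mul,
      ← Complex.ofReal_add, Complex.ofReal_re]
    field_simp
    ring
end
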